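/- Let 0 < r₀ < e^{-1}. Then there exists a smooth function f : ℝ² → ℝ with f = 0 on the closed ball of radius r₀ centered at the origin such that ∫_{B₁(0)} |∇f(x)|² dx − ∫₀^{2π} f(cos θ, sin θ)² dθ < 0. (Consequently, the equatorial disc in the modified ball M_{r₀} has index ind_∂ equal to 1 when r₀ < e^{-1}; a suitable smoothing of f(x) = log(|x|/r₀) furnishes the negative direction.) -/

import Mathlib

open MeasureTheory
open scoped ContDiff

noncomputable def auxChi (a m t : ℝ) : ℝ := Real.smoothTransition ((t - a)/(m - a))
noncomputable def auxG (a m t : ℝ) : ℝ := auxChi a m t * t⁻¹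
noncomputable def auxPsi (a m s : ℝ) : ℝ := ∫ t in a..s, auxG a m t

variable {a m : ℝ}

lemma auxChi_nonneg (t : ℝ) : 0 ≤ auxChi a m t := Real.smoothTransition.nonneg _
lemma auxChi_le_one (t : ℝ) : auxChi a m t ≤ 1 := Real.smoothTransition.le_one _

lemma auxChi_zero (ham : a < m) {t : ℝ} (ht : t ≤ a) : auxChi a m t = 0 :=
  Real.smoothTransition.zero_of_nonpos <|
    div_nonpos_of_nonpos_of_nonneg (by linarith) (by linarith)

lemma auxChi_one (ham : a < m) {t : ℝ} (ht : m ≤ t) : auxChi a m t = 1 :=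
  Real.smoothTransition.one_of_one_le <| (one_le_div (by linarith)).2 (by linarith)

lemma auxG_zero (ham : a < m) {t : ℝ} (ht : t ≤ a) : auxG a m t = 0 := by
  simp [auxG, auxChi_zero ham ht]

lemma auxG_nonneg (ha : 0 < a) (ham : a < m) (t : ℝ) : 0 ≤ auxG a m t := by
  rcases le_or_gt t 0 with h | h
  · rw [auxG_zero ham (by linarith)]
  · exact mul_nonneg (auxChi_nonneg t) (inv_nonneg.2 h.le)

lemma auxG_contDiff (ha : 0 < a) (ham : a < m) : ContDiff ℝ ∞ (auxG a m) := by
  rw [contDiff_iff_contDiffAt]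
  intro t
  rcases ne_or_eq t 0 with ht | rfl
  · exact ((Real.smoothTransition.contDiff.comp
      ((contDiff_id.sub contDiff_const).div_const _)).contDiffAt).mul (contDiffAt_inv ℝ ht)
  · have : ∀ᶠ s in nhds (0:ℝ), auxG a m s = 0 := by
      filter_upwards [Iio_mem_nhds ha] with s hs
      exact auxG_zero ham (le_of_lt hs)
    exact contDiffAt_const.congr_of_eventuallyEq this

lemma auxG_continuous (ha : 0 < a) (ham : a < m) : Continuous (auxG a m) :=
  (auxG_contDiff ha ham).continuous

lemma auxG_intervalIntegrable (ha : 0 < a) (ham : a < m) (x y : ℝ) :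
    IntervalIntegrable (auxG a m) volume x y :=
  (auxG_continuous ha ham).intervalIntegrable x y

lemma auxPsi_hasDerivAt (ha : 0 < a) (ham : a < m) (s : ℝ) :
    HasDerivAt (auxPsi a m) (auxG a m s) s :=
  intervalIntegral.integral_hasDerivAt_right (auxG_intervalIntegrable ha ham a s)
    ((auxG_continuous ha ham).stronglyMeasurableAtFilter _ _)
    (auxG_continuous ha ham).continuousAt

lemma auxPsi_contDiff (ha : 0 < a) (ham : a < m) : ContDiff ℝ ∞ (auxPsi a m) := by
  rw [contDiff_infty_iff_deriv]
  constructor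
  · exact fun s => (auxPsi_hasDerivAt ha ham s).differentiableAt
  · have : deriv (auxPsi a m) = auxG a m :=
      funext fun s => (auxPsi_hasDerivAt ha ham s).deriv
    rw [this]; exact auxG_contDiff ha ham

lemma auxPsi_zero (ham : a < m) {s : ℝ} (hs : s ≤ a) : auxPsi a m s = 0 := by
  rw [auxPsi]
  rw [intervalIntegral.integral_congr (g := fun _ => (0:ℝ))
    (fun t ht => auxG_zero ham ?_)]
  · simp
  · rcases Set.mem_uIcc.1 ht with h | h
    · linarith [h.2]
    · exact h.2

lemma auxPsi_one_ge (ha : 0 < a) (ham : a < m) (hm1 : m ≤ 1) :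
    -Real.log m ≤ auxPsi a m 1 := by
  have hm0 : 0 < m := lt_trans ha ham
  have hsplit : auxPsi a m 1 = (∫ t in a..m, auxG a m t) + ∫ t in m..1, auxG a m t :=
    (intervalIntegral.integral_add_adjacent_intervals
      (auxG_intervalIntegrable ha ham a m) (auxG_intervalIntegrable ha ham m 1)).symm
  have h1 : 0 ≤ ∫ t in a..m, auxG a m t :=
    intervalIntegral.integral_nonneg ham.le (fun t _ => auxG_nonneg ha ham t)
  have h2 : (∫ t in m..1, auxG a m t) = ∫ t in m..1, t⁻¹ := by
    apply intervalIntegral.integral_congr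
    intro t ht
    rw [Set.uIcc_of_le hm1] at ht
    rw [auxG, auxChi_one ham ht.1, one_mul]
  have h3 : (∫ t in m..1, t⁻¹) = Real.log (1 / m) := integral_inv_of_pos hm0 one_pos
  rw [hsplit, h2, h3, Real.log_div one_ne_zero hm0.ne', Real.log_one]
  linarith

lemma auxEnergy_le (ha : 0 < a) (ham : a < m) (hm1 : m ≤ 1) :
    (∫ u in (0:ℝ)..1, 2*u*(auxG a m u)^2) ≤ 2 * auxPsi a m 1 := by
  have hcont := auxG_continuous ha ham
  have hmono : (∫ u in (0:ℝ)..1, 2*u*(auxG a m u)^2) ≤ ∫ u in (0:ℝ)..1, 2 * auxG a m u := by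
    apply intervalIntegral.integral_mono_on zero_le_one
    · exact (((continuous_const.mul continuous_id).mul (hcont.pow 2))).intervalIntegrable 0 1
    · exact (continuous_const.mul hcont).intervalIntegrable 0 1
    · intro u hu
      rcases le_or_gt u a with h | h
      · rw [auxG_zero ham h]; simp
      · have hu0 : 0 < u := lt_trans ha h
        rw [auxG]
        have : 2*u*(auxChi a m u * u⁻¹)^2 = 2 * (auxChi a m u)^2 * u⁻¹ := by
          field_simp
        rw [this]
        have h2 : (auxChi a m u)^2 ≤ auxChi a m u := by
          nlinarith [auxChi_nonneg (a := a) (m := m) u, auxChi_le_one (a := a) (m := m) u]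
        have := inv_nonneg.2 hu0.le
        nlinarith
  have hsplit : (∫ u in (0:ℝ)..1, auxG a m u)
      = (∫ u in (0:ℝ)..a, auxG a m u) + ∫ u in a..1, auxG a m u :=
    (intervalIntegral.integral_add_adjacent_intervals
      (auxG_intervalIntegrable ha ham 0 a) (auxG_intervalIntegrable ha ham a 1)).symm
  have h0a : (∫ u in (0:ℝ)..a, auxG a m u) = 0 := by
    rw [intervalIntegral.integral_congr (g := fun _ => (0:ℝ))
      (fun t ht => auxG_zero ham ?_)]
    · simp
    · rw [Set.uIcc_of_le ha.le] at ht; exact ht.2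
  calc (∫ u in (0:ℝ)..1, 2*u*(auxG a m u)^2) ≤ ∫ u in (0:ℝ)..1, 2 * auxG a m u := hmono
    _ = 2 * ∫ u in (0:ℝ)..1, auxG a m u := by
        rw [← intervalIntegral.integral_const_mul]
    _ = 2 * auxPsi a m 1 := by rw [hsplit, h0a, zero_add]; rfl

lemma auxF_hasGradientAt (ha : 0 < a) (ham : a < m)
    (x : EuclideanSpace ℝ (Fin 2)) :
    HasGradientAt (fun y : EuclideanSpace ℝ (Fin 2) => auxPsi a m (‖y‖^2))
      ((2 * auxG a m (‖x‖^2)) • x) x := by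
  have h1 : HasFDerivAt (fun y : EuclideanSpace ℝ (Fin 2) => ‖y‖^2)
      (2 • (innerSL ℝ x)) x := (hasStrictFDerivAt_norm_sq x).hasFDerivAt
  have h2 := (auxPsi_hasDerivAt ha ham (‖x‖^2)).comp_hasFDerivAt x h1
  rw [hasGradientAt_iff_hasFDerivAt]
  refine h2.congr_fderiv ?_
  ext y
  simp [InnerProductSpace.toDual_apply_apply, real_inner_smul_left]
  ring


/-- **Instability of the equatorial disc in the modified ball `M_{r₀}` for `r₀ < e⁻¹`.**
If `0 < r₀ < e⁻¹`, there is a smooth function `f : ℝ² → ℝ` vanishing on the closed ball of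
radius `r₀` around the origin with
`Q(f) = ∫_{B₁} |∇f|² − ∫₀^{2π} f(cos θ, sin θ)² dθ < 0`. -/
theorem exists_negative_direction_of_lt_inv_exp
    (r₀ : ℝ) (hr₀ : 0 < r₀) (hr₀e : r₀ < Real.exp (-1)) :
    ∃ f : EuclideanSpace ℝ (Fin 2) → ℝ, ContDiff ℝ ∞ f ∧
      (∀ x ∈ Metric.closedBall (0 : EuclideanSpace ℝ (Fin 2)) r₀, f x = 0) ∧
      (∫ x in Metric.ball (0 : EuclideanSpace ℝ (Fin 2)) 1, ‖gradient f x‖ ^ 2) -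
        (∫ θ in (0:ℝ)..(2 * Real.pi),
          f ((WithLp.equiv 2 (Fin 2 → ℝ)).symm ![Real.cos θ, Real.sin θ]) ^ 2) < 0 := by
  set a : ℝ := r₀ ^ 2 with ha_def
  set m : ℝ := (r₀ ^ 2 + Real.exp (-2)) / 2 with hm_def
  have ha : 0 < a := by positivity
  have haexp : a < Real.exp (-2) := by
    have : Real.exp (-2) = Real.exp (-1) * Real.exp (-1) := by
      rw [← Real.exp_add]; norm_num
    rw [ha_def, this, sq]
    exact mul_lt_mul' hr₀e.le hr₀e hr₀.le (Real.exp_pos _)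
  have ham : a < m := by rw [hm_def]; linarith
  have hmexp : m < Real.exp (-2) := by rw [hm_def]; linarith
  have hm0 : 0 < m := lt_trans ha ham
  have hm1 : m ≤ 1 := by
    have : Real.exp (-2) < 1 := Real.exp_lt_one_iff.2 (by norm_num)
    linarith
  set ψ1 : ℝ := auxPsi a m 1 with hψ1_def
  have hψ1 : 2 < ψ1 := by
    have h1 := auxPsi_one_ge ha ham hm1
    have h2 : Real.log m < -2 := by
      apply Real.exp_lt_exp.mp
      rw [Real.exp_log hm0]; exact hmexp
    linarith
  refine ⟨fun x => auxPsi a m (‖x‖ ^ 2), ?_, ?_, ?_⟩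
  · exact (auxPsi_contDiff ha ham).comp (contDiff_norm_sq ℝ)
  · intro x hx
    rw [Metric.mem_closedBall, dist_zero_right] at hx
    exact auxPsi_zero ham (by rw [ha_def]; exact pow_le_pow_left₀ (norm_nonneg x) hx 2)
  -- boundary integral
  have hcirc : ∀ θ : ℝ, ‖((WithLp.equiv 2 (Fin 2 → ℝ)).symm ![Real.cos θ, Real.sin θ] :
      EuclideanSpace ℝ (Fin 2))‖ ^ 2 = 1 := by
    intro θ
    rw [EuclideanSpace.norm_eq, Real.sq_sqrt (by positivity)]
    simp [Fin.sum_univ_two, sq_abs, Real.sin_sq_add_cos_sq]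
  have hB : (∫ θ in (0:ℝ)..(2 * Real.pi),
      auxPsi a m (‖((WithLp.equiv 2 (Fin 2 → ℝ)).symm ![Real.cos θ, Real.sin θ] :
        EuclideanSpace ℝ (Fin 2))‖ ^ 2) ^ 2) = 2 * Real.pi * ψ1 ^ 2 := by
    simp only [hcirc]
    rw [intervalIntegral.integral_const]
    simp [mul_comm]; rfl
  -- energy integral
  set h : ℝ → ℝ := fun r => (2 * auxG a m (r ^ 2)) ^ 2 * r ^ 2 with hh_def
  have hnorm : ∀ x : EuclideanSpace ℝ (Fin 2),
      ‖gradient (fun y : EuclideanSpace ℝ (Fin 2) => auxPsi a m (‖y‖ ^ 2)) x‖ ^ 2 = h ‖x‖ := by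
    intro x
    rw [(auxF_hasGradientAt ha ham x).gradient, norm_smul]
    simp [hh_def, mul_pow, sq_abs]
  set F : ℝ → ℝ := Set.indicator (Set.Iio 1) h with hF_def
  have hE1 : (∫ x in Metric.ball (0:EuclideanSpace ℝ (Fin 2)) 1,
      ‖gradient (fun y : EuclideanSpace ℝ (Fin 2) => auxPsi a m (‖y‖ ^ 2)) x‖ ^ 2)
      = ∫ x : EuclideanSpace ℝ (Fin 2), F ‖x‖ := by
    simp only [hnorm]
    rw [← integral_indicator measurableSet_ball]
    congr 1
    funext x
    by_cases hx : ‖x‖ < 1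
    · simp [hF_def, Set.indicator, mem_ball_zero_iff, Set.mem_Iio, hx]
    · simp [hF_def, Set.indicator, mem_ball_zero_iff, Set.mem_Iio, hx]
  have hdim : Module.finrank ℝ (EuclideanSpace ℝ (Fin 2)) = 2 := by
    simp [finrank_euclideanSpace]
  have hE2 : (∫ x : EuclideanSpace ℝ (Fin 2), F ‖x‖)
      = 2 * Real.pi * ∫ y in Set.Ioi (0:ℝ), y * F y := by
    rw [integral_fun_norm_addHaar volume F, hdim]
    rw [measureReal_def, EuclideanSpace.volume_ball]
    norm_num [Real.Gamma_two, Real.sq_sqrt Real.pi_pos.le,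
      ENNReal.toReal_ofReal Real.pi_pos.le, mul_assoc]
  set J : ℝ := ∫ u in (0:ℝ)..1, 2 * u * (auxG a m u) ^ 2 with hJ_def
  have hE3 : (∫ y in Set.Ioi (0:ℝ), y * F y) = J := by
    have : ∀ y : ℝ, y * F y = Set.indicator (Set.Iio 1) (fun y => y * h y) y := by
      intro y
      by_cases hy : y ∈ Set.Iio (1:ℝ) <;> simp [hF_def, Set.indicator, hy]
    simp only [this]
    rw [setIntegral_indicator measurableSet_Iio, Set.Ioi_inter_Iio]
    rw [← integral_Ioc_eq_integral_Ioo, ← intervalIntegral.integral_of_le zero_le_one]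
    rw [hJ_def]
    have hsub := intervalIntegral.integral_comp_smul_deriv
      (f := fun y : ℝ => y ^ 2) (f' := fun y : ℝ => 2 * y)
      (g := fun u : ℝ => 2 * u * (auxG a m u) ^ 2) (a := 0) (b := 1)
      (fun x _ => by simpa using hasDerivAt_pow 2 x)
      ((continuous_const.mul continuous_id).continuousOn)
      (((continuous_const.mul continuous_id).mul
        (((auxG_continuous ha ham).pow 2))))
    simp only [one_pow, zero_pow, OfNat.ofNat_ne_zero, ne_eq, not_false_eq_true] at hsub
    rw [← hsub]
    apply intervalIntegral.integral_congr
    intro y _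
    simp only [hh_def, smul_eq_mul, Function.comp]
    ring
  have hJle : J ≤ 2 * ψ1 := auxEnergy_le ha ham hm1
  rw [hB, hE1, hE2, hE3]
  have hJψ : J < ψ1 ^ 2 := by nlinarith
  have := mul_lt_mul_of_pos_left hJψ (by positivity : (0:ℝ) < 2 * Real.pi)
  linarith
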